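/- Let γ > 0 and let a1, a2, a3 be nonnegative, pairwise distinct real numbers. Then the minimal polynomial of the 4×4 matrix L = γ( a1 · σ1⊗σ1 + a2 · σ2ᵀ⊗σ2 + a3 · σ3⊗σ3 − (a1+a2+a3) · I₄ ) equals its characteristic polynomial, i.e. the minimal polynomial has degree 4. -/
import Mathlib


open Matrix Complex Kronecker Polynomial

noncomputable section

/-- The Pauli matrices. -/
def pauli1 : Matrix (Fin 2) (Fin 2) ℂ := !![0, 1; 1, 0]
def pauli2 : Matrix (Fin 2) (Fin 2) ℂ := !![0, -I; I, 0]
def pauli3 : Matrix (Fin 2) (Fin 2) ℂ := !![1, 0; 0, -1]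

/-- The generator of evolution
`L = γ( a1 σ1⊗σ1 + a2 σ2ᵀ⊗σ2 + a3 σ3⊗σ3 − (a1+a2+a3) I₄ )`. -/
def gen2 (γ a1 a2 a3 : ℝ) : Matrix (Fin 2 × Fin 2) (Fin 2 × Fin 2) ℂ :=
  (γ : ℂ) • ((a1 : ℂ) • (pauli1 ⊗ₖ pauli1) + (a2 : ℂ) • (pauli2ᵀ ⊗ₖ pauli2)
    + (a3 : ℂ) • (pauli3 ⊗ₖ pauli3)
    - ((a1 + a2 + a3 : ℝ) : ℂ) • (1 : Matrix (Fin 2 × Fin 2) (Fin 2 × Fin 2) ℂ))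

lemma pauli2T : pauli2ᵀ = !![0, I; -I, 0] := by
  ext i j; fin_cases i <;> fin_cases j <;> simp [pauli2]

lemma isRoot_minpoly_of_eigen (A : Matrix (Fin 2 × Fin 2) (Fin 2 × Fin 2) ℂ) (μ : ℂ)
    (v : (Fin 2 × Fin 2) → ℂ) (hv : v ≠ 0) (h : A *ᵥ v = μ • v) :
    (minpoly ℂ A).IsRoot μ := by
  have heq : minpoly ℂ (Matrix.toLinAlgEquiv' A) = minpoly ℂ A :=
    minpoly.algHom_eq
      (Matrix.toLinAlgEquiv' : Matrix (Fin 2 × Fin 2) (Fin 2 × Fin 2) ℂ ≃ₐ[ℂ] _).toAlgHom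
      (Matrix.toLinAlgEquiv').injective A
  rw [← heq, ← Module.End.hasEigenvalue_iff_isRoot]
  exact Module.End.hasEigenvalue_of_hasEigenvector
    ⟨Module.End.mem_eigenspace_iff.mpr (by simpa [Matrix.toLinAlgEquiv'_apply] using h), hv⟩

lemma pos_sum {x y : ℝ} (hx : 0 ≤ x) (hy : 0 ≤ y) (hxy : x ≠ y) : 0 < x + y := by
  rcases hx.lt_or_eq with h | h
  · linarith
  rcases hy.lt_or_eq with h' | h'
  · linarith
  · exact absurd (by rw [← h, ← h']) hxy

lemma gen2_eig1 (γ a1 a2 a3 : ℝ) :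
    (gen2 γ a1 a2 a3) *ᵥ (fun p => !![(1:ℂ),0;0,1] p.1 p.2)
      = (0:ℂ) • (fun p => !![(1:ℂ),0;0,1] p.1 p.2) := by
  funext ⟨i, j⟩
  simp only [gen2, pauli2T]
  fin_cases i <;> fin_cases j <;>
    simp [pauli1, pauli2, pauli3, mulVec, dotProduct, Fintype.sum_prod_type,
      Fin.sum_univ_two, kroneckerMap_apply, Matrix.one_apply, Prod.ext_iff] <;> push_cast <;> ring

lemma gen2_eig2 (γ a1 a2 a3 : ℝ) :
    (gen2 γ a1 a2 a3) *ᵥ (fun p => !![(1:ℂ),0;0,-1] p.1 p.2)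
      = ((-2 * γ * (a1 + a2) : ℝ) : ℂ) • (fun p => !![(1:ℂ),0;0,-1] p.1 p.2) := by
  funext ⟨i, j⟩
  simp only [gen2, pauli2T]
  fin_cases i <;> fin_cases j <;>
    simp [pauli1, pauli2, pauli3, mulVec, dotProduct, Fintype.sum_prod_type,
      Fin.sum_univ_two, kroneckerMap_apply, Matrix.one_apply, Prod.ext_iff] <;> push_cast <;> ring

lemma gen2_eig3 (γ a1 a2 a3 : ℝ) :
    (gen2 γ a1 a2 a3) *ᵥ (fun p => !![(0:ℂ),1;1,0] p.1 p.2)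
      = ((-2 * γ * (a2 + a3) : ℝ) : ℂ) • (fun p => !![(0:ℂ),1;1,0] p.1 p.2) := by
  funext ⟨i, j⟩
  simp only [gen2, pauli2T]
  fin_cases i <;> fin_cases j <;>
    simp [pauli1, pauli2, pauli3, mulVec, dotProduct, Fintype.sum_prod_type,
      Fin.sum_univ_two, kroneckerMap_apply, Matrix.one_apply, Prod.ext_iff] <;> push_cast <;> ring

lemma gen2_eig4 (γ a1 a2 a3 : ℝ) :
    (gen2 γ a1 a2 a3) *ᵥ (fun p => !![(0:ℂ),1;-1,0] p.1 p.2)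
      = ((-2 * γ * (a1 + a3) : ℝ) : ℂ) • (fun p => !![(0:ℂ),1;-1,0] p.1 p.2) := by
  funext ⟨i, j⟩
  simp only [gen2, pauli2T]
  fin_cases i <;> fin_cases j <;>
    simp [pauli1, pauli2, pauli3, mulVec, dotProduct, Fintype.sum_prod_type,
      Fin.sum_univ_two, kroneckerMap_apply, Matrix.one_apply, Prod.ext_iff] <;> push_cast <;> ring

/-- for `γ > 0` and nonnegative pairwise-distinct parameters, the minimal
polynomial of the generator `L` equals its characteristic polynomial; in particular it
has degree `4`. -/
theorem gen2_minpoly_eq_charpoly (γ a1 a2 a3 : ℝ) (hγ : 0 < γ)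
    (h1 : 0 ≤ a1) (h2 : 0 ≤ a2) (h3 : 0 ≤ a3)
    (h12 : a1 ≠ a2) (h13 : a1 ≠ a3) (h23 : a2 ≠ a3) :
    minpoly ℂ (gen2 γ a1 a2 a3) = (gen2 γ a1 a2 a3).charpoly ∧
      (minpoly ℂ (gen2 γ a1 a2 a3)).natDegree = 4 := by
  have hγ' : γ ≠ 0 := ne_of_gt hγ
  set μ2 : ℂ := ((-2 * γ * (a1 + a2) : ℝ) : ℂ) with hμ2
  set μ3 : ℂ := ((-2 * γ * (a2 + a3) : ℝ) : ℂ) with hμ3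
  set μ4 : ℂ := ((-2 * γ * (a1 + a3) : ℝ) : ℂ) with hμ4
  have hp12 : (0:ℝ) < a1 + a2 := pos_sum h1 h2 h12
  have hp23 : (0:ℝ) < a2 + a3 := pos_sum h2 h3 h23
  have hp13 : (0:ℝ) < a1 + a3 := pos_sum h1 h3 h13
  have hcancel : ∀ x y : ℝ, x ≠ y → (-2 * γ * x : ℝ) ≠ -2 * γ * y := by
    intro x y hxy h
    apply hxy
    have : γ * (x - y) = 0 := by linarith
    rcases mul_eq_zero.mp this with h' | h'
    · exact absurd h' hγ'
    · linarith
  have hne02 : (0:ℂ) ≠ μ2 := by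
    rw [hμ2]; exact_mod_cast (by nlinarith : (0:ℝ) ≠ -2 * γ * (a1 + a2))
  have hne03 : (0:ℂ) ≠ μ3 := by
    rw [hμ3]; exact_mod_cast (by nlinarith : (0:ℝ) ≠ -2 * γ * (a2 + a3))
  have hne04 : (0:ℂ) ≠ μ4 := by
    rw [hμ4]; exact_mod_cast (by nlinarith : (0:ℝ) ≠ -2 * γ * (a1 + a3))
  have hne23 : μ2 ≠ μ3 := by
    rw [hμ2, hμ3]; exact_mod_cast hcancel _ _ (by intro h; exact h13 (by linarith))
  have hne24 : μ2 ≠ μ4 := by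
    rw [hμ2, hμ4]; exact_mod_cast hcancel _ _ (by intro h; exact h23 (by linarith))
  have hne34 : μ3 ≠ μ4 := by
    rw [hμ3, hμ4]; exact_mod_cast hcancel _ _ (by intro h; exact h12 (by linarith))
  -- eigenvectors
  have heig1 := gen2_eig1 γ a1 a2 a3
  have heig2 := gen2_eig2 γ a1 a2 a3
  have heig3 := gen2_eig3 γ a1 a2 a3
  have heig4 := gen2_eig4 γ a1 a2 a3
  rw [← hμ2] at heig2
  rw [← hμ3] at heig3
  rw [← hμ4] at heig4
  have r1 : (minpoly ℂ (gen2 γ a1 a2 a3)).IsRoot 0 :=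
    isRoot_minpoly_of_eigen _ _ _ (by
      intro h; have := congrFun h (0, 0); simp at this) heig1
  have r2 : (minpoly ℂ (gen2 γ a1 a2 a3)).IsRoot μ2 :=
    isRoot_minpoly_of_eigen _ _ _ (by
      intro h; have := congrFun h (0, 0); simp at this) heig2
  have r3 : (minpoly ℂ (gen2 γ a1 a2 a3)).IsRoot μ3 :=
    isRoot_minpoly_of_eigen _ _ _ (by
      intro h; have := congrFun h (0, 1); simp at this) heig3
  have r4 : (minpoly ℂ (gen2 γ a1 a2 a3)).IsRoot μ4 :=
    isRoot_minpoly_of_eigen _ _ _ (by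
      intro h; have := congrFun h (0, 1); simp at this) heig4
  have hdvd : minpoly ℂ (gen2 γ a1 a2 a3) ∣ (gen2 γ a1 a2 a3).charpoly :=
    (gen2 γ a1 a2 a3).minpoly_dvd_charpoly
  have hch : (gen2 γ a1 a2 a3).charpoly.Monic := (gen2 γ a1 a2 a3).charpoly_monic
  have hchdeg : (gen2 γ a1 a2 a3).charpoly.natDegree = 4 := by
    rw [Matrix.charpoly_natDegree_eq_dim]
    simp
  have hmne : minpoly ℂ (gen2 γ a1 a2 a3) ≠ 0 := by
    intro h
    rw [h, zero_dvd_iff] at hdvd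
    exact hch.ne_zero hdvd
  have hsub : ({0, μ2, μ3, μ4} : Finset ℂ) ⊆ (minpoly ℂ (gen2 γ a1 a2 a3)).roots.toFinset := by
    intro x hx
    simp only [Finset.mem_insert, Finset.mem_singleton] at hx
    rw [Multiset.mem_toFinset, mem_roots hmne]
    rcases hx with rfl | rfl | rfl | rfl <;> assumption
  have hcard : ({0, μ2, μ3, μ4} : Finset ℂ).card = 4 := by
    rw [Finset.card_insert_of_notMem (by simp [hne02, hne03, hne04]),
      Finset.card_insert_of_notMem (by simp [hne23, hne24]),
      Finset.card_insert_of_notMem (by simp [hne34]), Finset.card_singleton]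
  have hge : 4 ≤ (minpoly ℂ (gen2 γ a1 a2 a3)).natDegree := by
    calc 4 = ({0, μ2, μ3, μ4} : Finset ℂ).card := hcard.symm
      _ ≤ (minpoly ℂ (gen2 γ a1 a2 a3)).roots.toFinset.card := Finset.card_le_card hsub
      _ ≤ Multiset.card (minpoly ℂ (gen2 γ a1 a2 a3)).roots := Multiset.toFinset_card_le _
      _ ≤ _ := card_roots' _
  have hmon : (minpoly ℂ (gen2 γ a1 a2 a3)).Monic :=
    minpoly.monic (IsIntegral.of_finite ℂ _)
  have heq : minpoly ℂ (gen2 γ a1 a2 a3) = (gen2 γ a1 a2 a3).charpoly :=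
    eq_of_monic_of_associated hmon hch
      (associated_of_dvd_of_natDegree_le hdvd hch.ne_zero (by omega))
  exact ⟨heq, by rw [heq, hchdeg]⟩

end
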